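/- Let 0 < α < 1, σ ∈ (0,1], and u : [0,T] → ℝ with |u'(s)| ≤ C(1 + s^{α-1}) for s ∈ (0, t_1]. Define t_1^* = σ t_1 (with t_0 = 0) and u^{1,*} = σ u(t_1) + (1-σ) u(0). Then |u(t_1^*) - u^{1,*}| ≤ C' τ_1^2 t_1^{α-2} where τ_1 = t_1 and C' depends only on C, α, σ, T. -/

import Mathlib

open Real Set

theorem first_step_interpolation_bound (C α σ T : ℝ) (hC : 0 < C)
    (hα0 : 0 < α) (hα1 : α < 1) (hσ0 : 0 < σ) (hσ1 : σ ≤ 1) (hT : 0 < T) :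
    ∃ C' : ℝ, 0 < C' ∧ ∀ (u u' : ℝ → ℝ) (t₁ : ℝ), 0 < t₁ → t₁ ≤ T →
      ContinuousOn u (Set.Icc 0 T) →
      (∀ s ∈ Set.Ioc (0:ℝ) t₁, HasDerivAt u (u' s) s) →
      (∀ s ∈ Set.Ioc (0:ℝ) t₁, |u' s| ≤ C * (1 + s ^ (α - 1))) →
      |u (σ * t₁) - (σ * u t₁ + (1 - σ) * u 0)| ≤ C' * t₁ ^ 2 * t₁ ^ (α - 2) := by
  set G : ℝ → ℝ := fun s => C * s + (C / α) * s ^ α with hGdef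
  refine ⟨C * T ^ (1 - α) + C / α, by positivity, ?_⟩
  intro u u' t₁ ht₁ ht₁T hu hderiv hbound
  have hGcont : ContinuousOn G (Icc 0 t₁) := by
    apply ContinuousOn.add (by fun_prop)
    apply ContinuousOn.mul continuousOn_const
    intro x hx
    exact (Real.continuousAt_rpow_const x α (Or.inr hα0.le)).continuousWithinAt
  have hGderiv : ∀ x ∈ Ioo (0:ℝ) t₁, HasDerivAt G (C * (1 + x ^ (α - 1))) x := by
    intro x hx
    have h1 : HasDerivAt (fun s : ℝ => s ^ α) (α * x ^ (α - 1)) x :=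
      Real.hasDerivAt_rpow_const (Or.inl (ne_of_gt hx.1))
    have h2 := ((hasDerivAt_id x).const_mul C).add (h1.const_mul (C / α))
    refine h2.congr_deriv ?_
    rw [← mul_assoc, div_mul_cancel₀ C hα0.ne']
    ring
  have huIcc : ContinuousOn u (Icc 0 t₁) :=
    hu.mono (Icc_subset_Icc le_rfl ht₁T)
  have hmono : ∀ (e : ℝ), e = 1 ∨ e = -1 →
      MonotoneOn (fun s => G s + e * u s) (Icc 0 t₁) := by
    intro e he
    apply monotoneOn_of_deriv_nonneg (convex_Icc 0 t₁)
      (hGcont.add (continuousOn_const.mul huIcc))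
    · intro x hx
      rw [interior_Icc] at hx
      exact ((hGderiv x hx).add
        ((hderiv x ⟨hx.1, hx.2.le⟩).const_mul e)).differentiableAt.differentiableWithinAt
    · intro x hx
      rw [interior_Icc] at hx
      show 0 ≤ deriv (G + fun y => e * u y) x
      rw [((hGderiv x hx).add ((hderiv x ⟨hx.1, hx.2.le⟩).const_mul e)).deriv]
      have hb := hbound x ⟨hx.1, hx.2.le⟩
      have h1 := le_abs_self (u' x)
      have h2 := neg_abs_le (u' x)
      rcases he with rfl | rfl <;> nlinarith
  have key : ∀ a b, 0 ≤ a → a ≤ b → b ≤ t₁ → |u b - u a| ≤ G b - G a := by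
    intro a b ha hab hbt
    have hamem : a ∈ Icc 0 t₁ := ⟨ha, hab.trans hbt⟩
    have hbmem : b ∈ Icc 0 t₁ := ⟨ha.trans hab, hbt⟩
    have m1 := hmono 1 (Or.inl rfl) hamem hbmem hab
    have m2 := hmono (-1) (Or.inr rfl) hamem hbmem hab
    simp only at m1 m2
    rw [abs_sub_le_iff]
    constructor <;> linarith
  have hst : σ * t₁ ≤ t₁ := by nlinarith
  have hst0 : 0 ≤ σ * t₁ := by positivity
  have k1 := key (σ * t₁) t₁ hst0 hst le_rfl
  have k2 := key 0 (σ * t₁) le_rfl hst0 hst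
  have hG0 : G 0 = 0 := by
    simp [hGdef, Real.zero_rpow (ne_of_gt hα0)]
  have habs : |u (σ * t₁) - (σ * u t₁ + (1 - σ) * u 0)| ≤ G t₁ := by
    have e1 : u (σ * t₁) - (σ * u t₁ + (1 - σ) * u 0)
        = -(σ * (u t₁ - u (σ * t₁))) + (1 - σ) * (u (σ * t₁) - u 0) := by ring
    rw [e1]
    have h1 : |σ * (u t₁ - u (σ * t₁))| ≤ σ * (G t₁ - G (σ * t₁)) := by
      rw [abs_mul, abs_of_pos hσ0]
      exact mul_le_mul_of_nonneg_left k1 hσ0.le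
    have h2 : |(1 - σ) * (u (σ * t₁) - u 0)| ≤ (1 - σ) * (G (σ * t₁) - G 0) := by
      rw [abs_mul, abs_of_nonneg (by linarith : (0:ℝ) ≤ 1 - σ)]
      exact mul_le_mul_of_nonneg_left k2 (by linarith)
    have gm1 := hmono 1 (Or.inl rfl) ⟨hst0, hst⟩ ⟨ht₁.le, le_rfl⟩ hst
    have gm2 := hmono (-1) (Or.inr rfl) ⟨hst0, hst⟩ ⟨ht₁.le, le_rfl⟩ hst
    simp only at gm1 gm2
    have hGmono : G (σ * t₁) ≤ G t₁ := by linarith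
    have gm3 := hmono 1 (Or.inl rfl) ⟨le_rfl, ht₁.le⟩ ⟨hst0, hst⟩ hst0
    have gm4 := hmono (-1) (Or.inr rfl) ⟨le_rfl, ht₁.le⟩ ⟨hst0, hst⟩ hst0
    simp only at gm3 gm4
    have hG0le : G 0 ≤ G (σ * t₁) := by linarith
    calc |(-(σ * (u t₁ - u (σ * t₁)))) + (1 - σ) * (u (σ * t₁) - u 0)|
        ≤ |σ * (u t₁ - u (σ * t₁))| + |(1 - σ) * (u (σ * t₁) - u 0)| := by
          rw [← abs_neg (σ * (u t₁ - u (σ * t₁)))] ; exact abs_add_le _ _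
      _ ≤ σ * (G t₁ - G (σ * t₁)) + (1 - σ) * (G (σ * t₁) - G 0) := add_le_add h1 h2
      _ ≤ G t₁ := by
          nlinarith [mul_nonneg hσ0.le (by linarith : (0:ℝ) ≤ G (σ * t₁)),
            mul_nonneg (by linarith : (0:ℝ) ≤ 1 - σ)
              (by linarith : (0:ℝ) ≤ G t₁ - G (σ * t₁))]
  have hpow : t₁ ^ 2 * t₁ ^ (α - 2) = t₁ ^ α := by
    rw [← Real.rpow_natCast t₁ 2, ← Real.rpow_add ht₁]
    norm_num
  have hGt : G t₁ ≤ (C * T ^ (1 - α) + C / α) * t₁ ^ α := by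
    have ht : t₁ = t₁ ^ (1 - α) * t₁ ^ α := by
      rw [← Real.rpow_add ht₁]; simp
    have hle : t₁ ^ (1 - α) ≤ T ^ (1 - α) :=
      Real.rpow_le_rpow ht₁.le ht₁T (by linarith)
    have hpos : (0:ℝ) < t₁ ^ α := Real.rpow_pos_of_pos ht₁ α
    simp only [hGdef]
    calc C * t₁ + C / α * t₁ ^ α
        = C * (t₁ ^ (1 - α) * t₁ ^ α) + C / α * t₁ ^ α := by rw [← ht]
      _ ≤ C * (T ^ (1 - α) * t₁ ^ α) + C / α * t₁ ^ α := by
          nlinarith [mul_le_mul_of_nonneg_right hle hpos.le]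
      _ = (C * T ^ (1 - α) + C / α) * t₁ ^ α := by ring
  calc |u (σ * t₁) - (σ * u t₁ + (1 - σ) * u 0)| ≤ G t₁ := habs
    _ ≤ (C * T ^ (1 - α) + C / α) * t₁ ^ α := hGt
    _ = (C * T ^ (1 - α) + C / α) * t₁ ^ 2 * t₁ ^ (α - 2) := by
        rw [mul_assoc, hpow]
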